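/- In terms of the multiplicity vector (f_i)_{i≥1} of a partition λ, the condition that λ_i − λ_{i+2} = 3 implies λ_i ≠ λ_{i+1} (for all valid i), together with λ_i − λ_{i+2} ≥ 3 for all i, is equivalent to: f_j + f_{j+1} + f_{j+2} ≤ 2 for all j, and there is no j ≥ 1 with f_j ≥ 1, f_{j+1} = f_{j+2} = 0, and f_{j+3} ≥ 2. -/

import Mathlib

private lemma stmt5_count_eq (l : List ℕ) (j : ℕ) :
    l.count j + l.count (j+1) + l.count (j+2)
      = l.countP (fun x => decide (j ≤ x ∧ x ≤ j+2)) := by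
  induction l with
  | nil => simp
  | cons a t ih =>
    simp only [List.count_cons, List.countP_cons, ih]
    by_cases h1 : a = j <;> by_cases h2 : a = j+1 <;> by_cases h3 : a = j+2 <;>
      simp_all <;> omega

private lemma stmt5_mono (l : List ℕ) (hsort : l.Pairwise (· ≥ ·)) {a b : ℕ}
    (hab : a ≤ b) (hb : b < l.length) : l[b] ≤ l[a] := by
  have := hsort.rel_get_of_le (a := ⟨a, lt_of_le_of_lt hab hb⟩) (b := ⟨b, hb⟩)
    (by simpa [Fin.le_def] using hab)
  simpa [List.get_eq_getElem] using this

private lemma stmt5_three (l : List ℕ) (p : ℕ → Bool) (h : 3 ≤ l.countP p) :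
    ∃ a b c : Fin l.length, a < b ∧ b < c ∧ p (l.get a) ∧ p (l.get b) ∧ p (l.get c) := by
  have hsub : List.Sublist (l.filter p) l := List.filter_sublist
  rw [List.countP_eq_length_filter] at h
  obtain ⟨f, hf⟩ := List.sublist_iff_exists_fin_orderEmbedding_get_eq.mp hsub
  refine ⟨f ⟨0, by omega⟩, f ⟨1, by omega⟩, f ⟨2, by omega⟩,
    f.strictMono (by simp [Fin.lt_def]), f.strictMono (by simp [Fin.lt_def]), ?_, ?_, ?_⟩ <;>
  · rw [← hf]
    exact List.of_mem_filter (List.get_mem _ _)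

private lemma stmt5_two (l : List ℕ) (p : ℕ → Bool) (h : 2 ≤ l.countP p) :
    ∃ a b : Fin l.length, a < b ∧ p (l.get a) ∧ p (l.get b) := by
  have hsub : List.Sublist (l.filter p) l := List.filter_sublist
  rw [List.countP_eq_length_filter] at h
  obtain ⟨f, hf⟩ := List.sublist_iff_exists_fin_orderEmbedding_get_eq.mp hsub
  refine ⟨f ⟨0, by omega⟩, f ⟨1, by omega⟩,
    f.strictMono (by simp [Fin.lt_def]), ?_, ?_⟩ <;>
  · rw [← hf]
    exact List.of_mem_filter (List.get_mem _ _)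

set_option maxHeartbeats 1000000 in
theorem stmt5 (l : List ℕ) (hpos : ∀ x ∈ l, 0 < x) (hsort : l.Pairwise (· ≥ ·)) :
    ((∀ i, i + 2 < l.length → l[i+2]! + 3 ≤ l[i]!) ∧
     (∀ i, i + 2 < l.length → l[i]! - l[i+2]! = 3 → l[i]! ≠ l[i+1]!))
      ↔ ((∀ j : ℕ, l.count j + l.count (j + 1) + l.count (j + 2) ≤ 2) ∧
         ¬ ∃ j : ℕ, 1 ≤ j ∧ 1 ≤ l.count j ∧ l.count (j + 1) = 0 ∧
            l.count (j + 2) = 0 ∧ 2 ≤ l.count (j + 3)) := by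
  constructor
  · rintro ⟨hA, hB⟩
    constructor
    · intro j
      by_contra hc
      push_neg at hc
      rw [stmt5_count_eq] at hc
      obtain ⟨a, b, c, hab, hbc, hpa, hpb, hpc⟩ :=
        stmt5_three l (fun x => decide (j ≤ x ∧ x ≤ j+2)) (by omega)
      simp only [decide_eq_true_eq] at hpa hpb hpc
      have hab' := Fin.lt_def.mp hab
      have hbc' := Fin.lt_def.mp hbc
      have hcl := c.2
      have h2 : (a : ℕ) + 2 < l.length := by omega
      have hA' := hA a h2
      rw [getElem!_pos l ((a : ℕ) + 2) h2, getElem!_pos l (a : ℕ) (by omega)] at hA'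
      have hm : l[(c : ℕ)] ≤ l[(a : ℕ) + 2] := stmt5_mono l hsort (by omega) c.2
      simp only [List.get_eq_getElem] at hpa hpc
      omega
    · rintro ⟨j, hj1, hcj, hcj1, hcj2, hcj3⟩
      have hcj3' : 2 ≤ l.countP (fun x => x == j + 3) := by
        rwa [← List.count]
      obtain ⟨a, b, hab, hpa, hpb⟩ := stmt5_two l _ hcj3'
      simp only [beq_iff_eq, List.get_eq_getElem] at hpa hpb
      have hab' := Fin.lt_def.mp hab
      have hbl := b.2
      obtain ⟨c, hcl, hcv⟩ := List.mem_iff_getElem.mp (List.count_pos_iff.mp (by omega : 0 < l.count j))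
      have hbc : (b : ℕ) < c := by
        by_contra hle
        have := stmt5_mono l hsort (Nat.le_of_not_lt hle) b.2
        rw [hcv] at this; omega
      have h2 : (a : ℕ) + 2 < l.length := by omega
      have hA' := hA a h2
      have ha1 : l[(a : ℕ) + 1] = j + 3 := by
        have h1 : l[(a : ℕ) + 1] ≤ l[(a : ℕ)] := stmt5_mono l hsort (by omega) (by omega)
        have h2' : l[(b : ℕ)] ≤ l[(a : ℕ) + 1] := stmt5_mono l hsort (by omega) b.2
        omega
      have ha2 : l[(a : ℕ) + 2] = j := by
        rw [getElem!_pos l ((a : ℕ) + 2) h2, getElem!_pos l (a : ℕ) (by omega)] at hA'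
        have h2' : l[c] ≤ l[(a : ℕ) + 2] := stmt5_mono l hsort (by omega) hcl
        omega
      have hB' := hB a h2
      rw [getElem!_pos l ((a : ℕ) + 2) h2, getElem!_pos l (a : ℕ) (by omega),
        getElem!_pos l ((a : ℕ) + 1) (by omega)] at hB'
      rw [hpa, ha1, ha2] at hB'
      exact hB' (by omega) rfl
  · rintro ⟨hC, hD⟩
    have key : ∀ i (hi : i + 2 < l.length),
        l.drop i = l[i]'(by omega) :: l[i+1]'(by omega) :: l[i+2]'hi :: l.drop (i+3) := by
      intro i hi
      rw [← List.getElem_cons_drop (as := l) (i := i) (by omega), ← List.getElem_cons_drop (as := l) (i := i+1) (by omega),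
        ← List.getElem_cons_drop (as := l) (i := i+2) (by omega)]
    constructor
    · intro i hi
      rw [getElem!_pos l (i + 2) hi, getElem!_pos l i (by omega)]
      by_contra hc
      push_neg at hc
      set j := l[i+2]'hi with hj
      have h01 : l[i+1]'(by omega) ≤ l[i]'(by omega) := stmt5_mono l hsort (by omega) (by omega)
      have h12 : l[i+2]'hi ≤ l[i+1]'(by omega) := stmt5_mono l hsort (by omega) hi
      have hcount : 3 ≤ l.countP (fun x => decide (j ≤ x ∧ x ≤ j+2)) := by
        have hsub : List.Sublist (l.drop i) l := List.drop_sublist i l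
        have := hsub.countP_le (p := fun x => decide (j ≤ x ∧ x ≤ j+2))
        rw [key i hi] at this
        simp only [List.countP_cons] at this
        have e0 : (decide (j ≤ l[i]'(by omega) ∧ l[i]'(by omega) ≤ j+2)) = true := by
          simp; omega
        have e1 : (decide (j ≤ l[i+1]'(by omega) ∧ l[i+1]'(by omega) ≤ j+2)) = true := by
          simp; omega
        have e2 : (decide (j ≤ l[i+2]'hi ∧ l[i+2]'hi ≤ j+2)) = true := by
          simp; omega
        rw [if_pos e0, if_pos e1, if_pos e2] at this
        omega
      have := hC j
      rw [stmt5_count_eq] at this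
      omega
    · intro i hi hdiff heq
      rw [getElem!_pos l (i + 2) hi, getElem!_pos l i (by omega)] at hdiff
      rw [getElem!_pos l i (by omega), getElem!_pos l (i + 1) (by omega)] at heq
      obtain ⟨j, hj⟩ : ∃ j, l[i+2]'hi = j := ⟨_, rfl⟩
      rw [hj] at hdiff
      have h02 : j ≤ l[i]'(by omega) := hj ▸ stmt5_mono l hsort (by omega) hi
      have hi0 : l[i]'(by omega) = j + 3 := by omega
      have hjpos : 1 ≤ j := hj ▸ hpos _ (List.getElem_mem hi)
      apply hD
      refine ⟨j, hjpos, ?_, ?_, ?_, ?_⟩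
      · exact List.count_pos_iff.mpr (hj ▸ List.getElem_mem hi)
      · by_contra hne
        obtain ⟨m, hml, hmv⟩ := List.mem_iff_getElem.mp
          (List.count_pos_iff.mp (by omega : 0 < l.count (j+1)))
        rcases Nat.lt_or_ge m (i+2) with hm | hm
        · have := stmt5_mono l hsort (Nat.lt_succ_iff.mp hm) (Nat.lt_of_succ_lt hi)
          rw [hmv, ← heq, hi0] at this; omega
        · have := stmt5_mono l hsort hm hml
          rw [hmv, hj] at this; omega
      · by_contra hne
        obtain ⟨m, hml, hmv⟩ := List.mem_iff_getElem.mp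
          (List.count_pos_iff.mp (by omega : 0 < l.count (j+2)))
        rcases Nat.lt_or_ge m (i+2) with hm | hm
        · have := stmt5_mono l hsort (Nat.lt_succ_iff.mp hm) (Nat.lt_of_succ_lt hi)
          rw [hmv, ← heq, hi0] at this; omega
        · have := stmt5_mono l hsort hm hml
          rw [hmv, hj] at this; omega
      · rw [← List.duplicate_iff_two_le_count, List.duplicate_iff_sublist]
        have hsub : List.Sublist (l.drop i) l := List.drop_sublist i l
        refine List.Sublist.trans ?_ hsub
        rw [key i hi, hi0, ← heq, hi0]
        exact ((List.nil_sublist _).cons₂ _).cons₂ _
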